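/- arXiv:2201.01236 — 7 statements merged into one kernel-verified Lean document; each statement's English description precedes it below -/
import Mathlib

section
/- Any acyclic class of maps in a topos is right cancellable: if a composite v ∘ u belongs to the acyclic class and u belongs to it, then v belongs to it. -/
open CategoryTheory CategoryTheory.Limits

universe v u

namespace Paper

/-- A class of maps is closed under colimits in the arrow category. -/
def ClosedUnderColimits {C : Type u} [Category.{v} C] (P : MorphismProperty C) : Prop :=
  ∀ (J : Type v) [SmallCategory J] (D : J ⥤ Arrow C)
    (c : Cocone D), IsColimit c → (∀ j, P (D.obj j).hom) → P c.pt.hom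

/-- A class of maps is closed under finite limits in the arrow category. -/
def ClosedUnderFiniteLimits {C : Type u} [Category.{v} C] (P : MorphismProperty C) : Prop :=
  ∀ (J : Type v) [SmallCategory J] [FinCategory J] (D : J ⥤ Arrow C)
    (c : Cone D), IsLimit c → (∀ j, P (D.obj j).hom) → P c.pt.hom

/-- An acyclic class of maps: contains isomorphisms, closed under composition,
colimits in the arrow category, and base change. -/
structure AcyclicClass (C : Type u) [Category.{v} C] where
  P : MorphismProperty C
  iso : ∀ ⦃X Y : C⦄ (f : X ⟶ Y), IsIso f → P f
  comp : ∀ ⦃X Y Z : C⦄ (f : X ⟶ Y) (g : Y ⟶ Z), P f → P g → P (f ≫ g)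
  colim : ClosedUnderColimits P
  base_change : ∀ ⦃X Y X' Y' : C⦄ (f : X ⟶ Y) (f' : X' ⟶ Y') (g : Y' ⟶ Y) (g' : X' ⟶ X),
    IsPullback g' f' f g → P f → P f'

/-- The smallest acyclic class containing `S` (the acyclic class generated by `S`). -/
def acClosure {C : Type u} [Category.{v} C] (S : MorphismProperty C) : MorphismProperty C :=
  fun _ _ f => ∀ A : AcyclicClass C, (∀ ⦃X Y : C⦄ (g : X ⟶ Y), S g → A.P g) → A.P f

/-- The smallest congruence (acyclic class closed under finite limits) containing `S`. -/
def congClosure {C : Type u} [Category.{v} C] (S : MorphismProperty C) : MorphismProperty C :=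
  fun _ _ f => ∀ A : AcyclicClass C, ClosedUnderFiniteLimits A.P →
    (∀ ⦃X Y : C⦄ (g : X ⟶ Y), S g → A.P g) → A.P f

/-- A (surjection, monomorphism) image factorization for every map:
`f = e f ≫ m f` with `e f` an effective epi and `m f` a mono. -/
structure ImageFactorisation (C : Type u) [Category.{v} C] where
  mid : ∀ {X Y : C}, (X ⟶ Y) → C
  e : ∀ {X Y : C} (f : X ⟶ Y), X ⟶ mid f
  m : ∀ {X Y : C} (f : X ⟶ Y), mid f ⟶ Y
  fac : ∀ {X Y : C} (f : X ⟶ Y), e f ≫ m f = f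
  epi : ∀ {X Y : C} (f : X ⟶ Y), EffectiveEpi (e f)
  mono : ∀ {X Y : C} (f : X ⟶ Y), Mono (m f)

/-- Iterated diagonal of an arrow: `iterDiag 0 f = f`, `iterDiag (n+1) f = iterDiag n (Δ f)`. -/
noncomputable def iterDiag {C : Type u} [Category.{v} C] [HasPullbacks C] :
    ℕ → Arrow C → Arrow C
  | 0, f => f
  | n+1, f => iterDiag n (Arrow.mk (pullback.diagonal f.hom))

/-- The class of maps all of whose iterated diagonals lie in `P`. -/
def suspInfty {C : Type u} [Category.{v} C] [HasPullbacks C] (P : MorphismProperty C) :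
    MorphismProperty C :=
  fun _ _ f => ∀ n : ℕ, P (iterDiag n (Arrow.mk f)).hom

/-- The class of `P`-hypercoverings: maps whose iterated diagonals all have image in `P`. -/
def hcover {C : Type u} [Category.{v} C] [HasPullbacks C] (F : ImageFactorisation C)
    (P : MorphismProperty C) : MorphismProperty C :=
  fun _ _ f => ∀ n : ℕ, P (F.m (iterDiag n (Arrow.mk f)).hom)

/-- `connMaps n` : maps whose first `n` iterated diagonals (starting with the map itself)
are effective epimorphisms.  `connMaps 1` is the class of surjections. -/
def connMaps {C : Type u} [Category.{v} C] [HasPullbacks C] (n : ℕ) : MorphismProperty C :=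
  fun _ _ f => ∀ k < n, EffectiveEpi (iterDiag k (Arrow.mk f)).hom

/-- ∞-connected maps: all iterated diagonals are effective epimorphisms. -/
def infConn {C : Type u} [Category.{v} C] [HasPullbacks C] : MorphismProperty C :=
  fun _ _ f => ∀ k : ℕ, EffectiveEpi (iterDiag k (Arrow.mk f)).hom

/-- `u` is (uniquely) left orthogonal to `f`: every commutative square has a unique diagonal
filler. -/
def UniqueLift {C : Type u} [Category.{v} C] {A B X Y : C} (u : A ⟶ B) (f : X ⟶ Y) : Prop :=
  ∀ (a : A ⟶ X) (b : B ⟶ Y), u ≫ b = a ≫ f → ∃! d : B ⟶ X, u ≫ d = a ∧ d ≫ f = b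

/-- A class of maps is local: membership can be checked after base change along
an effective epimorphic family. -/
def IsLocalClass {C : Type u} [Category.{v} C] [HasPullbacks C] (M : MorphismProperty C) : Prop :=
  ∀ ⦃X Y : C⦄ (f : X ⟶ Y) (I : Type v) (B : I → C) (g : ∀ i, B i ⟶ Y),
    EffectiveEpiFamily B g → (∀ i, M (pullback.snd f (g i))) → M f

/-- A Grothendieck topology on a topos: a class of monomorphisms containing isomorphisms,
closed under composition and base change, local, and right cancellable among monos. -/
structure IsGTopology {C : Type u} [Category.{v} C] [HasPullbacks C]
    (G : MorphismProperty C) : Prop where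
  mono : ∀ ⦃X Y : C⦄ (f : X ⟶ Y), G f → Mono f
  iso : ∀ ⦃X Y : C⦄ (f : X ⟶ Y), IsIso f → G f
  comp : ∀ ⦃X Y Z : C⦄ (f : X ⟶ Y) (g : Y ⟶ Z), G f → G g → G (f ≫ g)
  base_change : ∀ ⦃X Y X' Y' : C⦄ (f : X ⟶ Y) (f' : X' ⟶ Y') (g : Y' ⟶ Y) (g' : X' ⟶ X),
    IsPullback g' f' f g → G f → G f'
  localClass : IsLocalClass G
  right_cancel : ∀ ⦃X Y Z : C⦄ (u : X ⟶ Y) (v : Y ⟶ Z), Mono u → Mono v → G (u ≫ v) → G v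

/-- A Lawvere–Tierney topology, presented as a closure operator on subobject lattices
which is monotone, inflating, idempotent, and natural (compatible with pullback). -/
structure LTTopology (C : Type u) [Category.{v} C] [HasPullbacks C] where
  j : ∀ (A : C), Subobject A → Subobject A
  monotone : ∀ (A : C) (S T : Subobject A), S ≤ T → j A S ≤ j A T
  inflating : ∀ (A : C) (S : Subobject A), S ≤ j A S
  idem : ∀ (A : C) (S : Subobject A), j A (j A S) = j A S
  natural : ∀ ⦃A B : C⦄ (f : A ⟶ B) (S : Subobject B),
    (Subobject.pullback f).obj (j B S) = j A ((Subobject.pullback f).obj S)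

/-- The class of `j`-dense monomorphisms. -/
def DenseClass {C : Type u} [Category.{v} C] [HasPullbacks C] (jt : LTTopology C) :
    MorphismProperty C :=
  fun _ A m => ∃ h : Mono m, jt.j A (@Subobject.mk _ _ _ _ m h) = ⊤

/-- The class of `j`-closed monomorphisms. -/
def ClosedClass {C : Type u} [Category.{v} C] [HasPullbacks C] (jt : LTTopology C) :
    MorphismProperty C :=
  fun _ A m => ∃ h : Mono m, jt.j A (@Subobject.mk _ _ _ _ m h) = @Subobject.mk _ _ _ _ m h

/-- The smallest Grothendieck topology containing `S`. -/
def gtopClosure {C : Type u} [Category.{v} C] [HasPullbacks C] (S : MorphismProperty C) :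
    MorphismProperty C :=
  fun _ _ f => ∀ G : MorphismProperty C, IsGTopology G →
    (∀ ⦃X Y : C⦄ (g : X ⟶ Y), S g → G g) → G f

/-- The class of `G`-coverings: maps whose image lies in `G`. -/
def coverOf {C : Type u} [Category.{v} C] (F : ImageFactorisation C) (G : MorphismProperty C) :
    MorphismProperty C :=
  fun _ _ f => G (F.m f)

/-- The class of `G`-closed monomorphisms: monomorphisms uniquely right orthogonal to `G`. -/
def closeOf {C : Type u} [Category.{v} C] (G : MorphismProperty C) : MorphismProperty C :=
  fun _ _ f => Mono f ∧ ∀ ⦃S A : C⦄ (u : S ⟶ A), G u → UniqueLift u f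

end Paper
/-- Any acyclic class in a topos is right cancellable. -/
theorem acyclic_right_cancellable {C : Type u} [Category.{v} C]
    [HasFiniteLimits C] [HasColimits C]
    (A : Paper.AcyclicClass C) {X Y Z : C} (u : X ⟶ Y) (v : Y ⟶ Z)
    (hvu : A.P (u ≫ v)) (hu : A.P u) : A.P v := by
  -- `v` is the pushout, in the arrow category, of the span `𝟙 Y ← u → u ≫ v`,
  -- and all three objects of this span lie in `A`.
  let M : Arrow C := Arrow.mk u
  let L : Arrow C := Arrow.mk (𝟙 Y)
  let R : Arrow C := Arrow.mk (u ≫ v)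
  let mL : M ⟶ L := Arrow.homMk (u := u) (v := 𝟙 Y) (by simp [M, L])
  let mR : M ⟶ R := Arrow.homMk (u := 𝟙 X) (v := v) (by simp [M, R])
  let Dspan : WalkingSpan ⥤ Arrow C := span mL mR
  let inl : L ⟶ Arrow.mk v := Arrow.homMk (u := 𝟙 Y) (v := v) (by simp [L])
  let inr : R ⟶ Arrow.mk v := Arrow.homMk (u := u) (v := 𝟙 Z) (by simp [R])
  have hcond : mL ≫ inl = mR ≫ inr := by
    ext
    · simp [mL, mR, inl, inr, M, L, R]
    · simp [mL, mR, inl, inr, M, L, R]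
  let c : PushoutCocone mL mR := PushoutCocone.mk inl inr hcond
  have key : ∀ (s : PushoutCocone mL mR), s.inl.right = v ≫ s.inr.right ∧
      u ≫ s.inl.left = s.inr.left := by
    intro s
    have h1 := congrArg (fun (t : M ⟶ s.pt) => t.right) s.condition
    have h2 := congrArg (fun (t : M ⟶ s.pt) => t.left) s.condition
    simp only [Arrow.comp_right, Arrow.comp_left] at h1 h2
    constructor
    · simpa [mL, mR, M, L, R] using h1
    · simpa [mL, mR, M, L, R] using h2
  have hc : IsColimit c := by
    refine PushoutCocone.IsColimit.mk hcond
      (fun s => Arrow.homMk (u := s.inl.left) (v := s.inr.right) ?_) (fun s => ?_) (fun s => ?_)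
      (fun s m hm1 hm2 => ?_)
    · have h1 : s.inl.left ≫ s.pt.hom = 𝟙 Y ≫ s.inl.right := Arrow.w s.inl
      have h2 := (key s).1
      show s.inl.left ≫ s.pt.hom = (Arrow.mk v).hom ≫ s.inr.right
      rw [h1, h2]; simp
    · ext
      · simp [inl, L]
      · simpa [inl, L] using ((key s).1).symm
    · ext
      · simpa [inr, R] using (key s).2
      · simp [inr, R]
    · ext
      · have := congrArg (fun (t : L ⟶ s.pt) => t.left) hm1
        simpa [inl, L] using this
      · have := congrArg (fun (t : R ⟶ s.pt) => t.right) hm2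
        simpa [inr, R] using this
  -- transport along an equivalence to fix universes
  let e : WalkingSpan ≌ ULiftHom.{v} (ULift.{v} WalkingSpan) :=
    ULiftHomULiftCategory.equiv.{v, v} WalkingSpan
  let J := ULiftHom.{v} (ULift.{v} WalkingSpan)
  let D : J ⥤ Arrow C := e.inverse ⋙ Dspan
  have hcolim : IsColimit ((c : Cocone Dspan).whisker e.inverse) :=
    IsColimit.whiskerEquivalence hc e.symm
  have hobj : ∀ o : WalkingSpan, A.P (Dspan.obj o).hom := by
    intro o
    rcases o with _ | (_ | _)
    · exact hu
    · exact A.iso (𝟙 Y) inferInstance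
    · exact hvu
  exact A.colim J D (Cocone.whisker e.inverse c) hcolim (fun j => hobj _)
end

section
/- Let A be an acyclic class in a topos E. A map f belongs to A if and only if both its image part im(f) and its coimage (surjective) part coim(f) belong to A. -/
open CategoryTheory CategoryTheory.Limits

universe v u

section Aux
variable {C : Type u} [Category.{v} C]

lemma isPullback_id_of_mono {X I Y : C} (e : X ⟶ I) (m : I ⟶ Y) [Mono m] :
    IsPullback (𝟙 X) e (e ≫ m) m :=
  IsPullback.of_isLimit (PullbackCone.IsLimit.mk (by simp) (fun s => s.fst)
    (fun s => by simp)
    (fun s => by rw [← cancel_mono m]; simpa using s.condition)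
    (fun s t h1 h2 => by simpa using h1))

variable [HasPullbacks C]

/-- First leg of the parallel pair in `Arrow C` whose colimit is `m`. -/
noncomputable def coimA {X I Y : C} (e : X ⟶ I) (m : I ⟶ Y) :
    Arrow.mk (pullback.fst e e ≫ e ≫ m) ⟶ Arrow.mk (e ≫ m) :=
  Arrow.homMk (u := pullback.fst e e) (v := 𝟙 Y) (by simp)

noncomputable def coimB {X I Y : C} (e : X ⟶ I) (m : I ⟶ Y) :
    Arrow.mk (pullback.fst e e ≫ e ≫ m) ⟶ Arrow.mk (e ≫ m) :=
  Arrow.homMk (u := pullback.snd e e) (v := 𝟙 Y) (by simp [pullback.condition_assoc])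

noncomputable def coimCocone {X I Y : C} (e : X ⟶ I) (m : I ⟶ Y) :
    Cofork (coimA e m) (coimB e m) :=
  Cofork.ofπ (P := Arrow.mk m) (Arrow.homMk (u := e) (v := 𝟙 Y) (by simp))
    (by apply Arrow.hom_ext <;> simp [coimA, coimB, pullback.condition])

noncomputable def coimIsColimit {X I Y : C} (e : X ⟶ I) (m : I ⟶ Y) (he : EffectiveEpi e) :
    IsColimit (coimCocone e m) := by
  haveI : EffectiveEpi e := he
  haveI : Epi e := inferInstance
  have hcond : ∀ (s : Cofork (coimA e m) (coimB e m)),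
      pullback.fst e e ≫ s.π.left = pullback.snd e e ≫ s.π.left := by
    intro s
    have := congrArg CommaMorphism.left s.condition
    simpa [coimA, coimB] using this
  have key : ∀ (s : Cofork (coimA e m) (coimB e m)) {Z : C} (a b : Z ⟶ X),
      a ≫ e = b ≫ e → a ≫ s.π.left = b ≫ s.π.left := by
    intro s Z a b hab
    have ha : pullback.lift a b hab ≫ pullback.fst e e = a := pullback.lift_fst a b hab
    have hb : pullback.lift a b hab ≫ pullback.snd e e = b := pullback.lift_snd a b hab
    have h := congrArg (fun k => pullback.lift a b hab ≫ k) (hcond s)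
    simp only [← Category.assoc] at h
    rw [ha, hb] at h
    exact h
  refine Cofork.IsColimit.mk _ (fun s => ?_) (fun s => ?_) (fun s t ht => ?_)
  · refine Arrow.homMk (u := EffectiveEpi.desc (X := I) (Y := X) e s.π.left (key s)) (v := s.π.right) ?_
    have h1 : e ≫ EffectiveEpi.desc e s.π.left (key s) = s.π.left :=
      EffectiveEpi.fac _ _ _
    have h2 : s.π.left ≫ s.pt.hom = (e ≫ m) ≫ s.π.right := s.π.w
    show EffectiveEpi.desc e s.π.left (key s) ≫ s.pt.hom = m ≫ s.π.right
    rw [← cancel_epi e, reassoc_of% h1, h2]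
    simp
  · apply Arrow.hom_ext
    · exact EffectiveEpi.fac e s.π.left (key s)
    · show 𝟙 Y ≫ s.π.right = s.π.right
      simp
  · have hl := congrArg CommaMorphism.left ht
    have hr := congrArg CommaMorphism.right ht
    simp [coimCocone, Comma.comp_left, Comma.comp_right] at hl hr
    apply Arrow.hom_ext
    · show (t.left : I ⟶ s.pt.left) = EffectiveEpi.desc e s.π.left (key s)
      have hl' : e ≫ t.left = s.π.left := hl
      exact (cancel_epi e).1 (hl'.trans (EffectiveEpi.fac e s.π.left (key s)).symm)
    · show t.right = s.π.right
      have hr' : 𝟙 Y ≫ t.right = s.π.right := hr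
      exact (Category.id_comp _).symm.trans hr'

end Aux

/-- A map belongs to an acyclic class iff both the mono and the surjective parts of
its image factorization do. -/

theorem acyclic_mem_iff_image_coimage_mem {C : Type u} [Category.{v} C]
    [HasFiniteLimits C] [HasColimits C]
    (A : Paper.AcyclicClass C) {X I Y : C} (f : X ⟶ Y) (e : X ⟶ I) (m : I ⟶ Y)
    (hfac : e ≫ m = f) (he : EffectiveEpi e) (hm : Mono m) :
    A.P f ↔ (A.P m ∧ A.P e) := by
  subst hfac
  constructor
  · intro hf
    haveI := hm
    have hPe : A.P e :=
      A.base_change (e ≫ m) e m (𝟙 X) (isPullback_id_of_mono e m) hf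
    refine ⟨?_, hPe⟩
    have hp1 : A.P (pullback.fst e e) :=
      A.base_change e (pullback.fst e e) e (pullback.snd e e)
        (IsPullback.of_hasPullback e e).flip hPe
    have hobj : A.P (pullback.fst e e ≫ e ≫ m) := A.comp _ _ hp1 hf
    have hcolim :
        IsColimit ((coimCocone e m).whisker (AsSmall.equiv.symm.functor)) :=
      (coimIsColimit e m he).whiskerEquivalence AsSmall.equiv.symm
    have := A.colim (AsSmall.{v} WalkingParallelPair)
      (AsSmall.equiv.symm.functor ⋙ parallelPair (coimA e m) (coimB e m))
      ((coimCocone e m).whisker (AsSmall.equiv.symm.functor)) hcolim ?_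
    · exact this
    · intro j
      obtain ⟨j⟩ := j
      cases j with
      | zero => exact hobj
      | one => exact hf
  · rintro ⟨hm', he'⟩
    exact A.comp e m he' hm'
end

section
/- For any acyclic class A in a topos, the class of monomorphisms in A equals the class of images of maps in A, i.e., A ∩ Mono = { im(f) | f ∈ A }; dually, A ∩ Surj = { coim(f) | f ∈ A }. -/
open CategoryTheory CategoryTheory.Limits

universe v u

section AuxLemmas

open Paper

variable {C : Type u} [Category.{v} C]

/-- Transfer `A.P` along `f = u ≫ h ≫ v` with `u`, `v` isos. -/
lemma AcyclicClass.of_comp_iso (A : Paper.AcyclicClass C)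
    {X Y X' Y' : C} {f : X ⟶ Y} {h : X' ⟶ Y'} (u : X ⟶ X') (v : Y' ⟶ Y)
    [IsIso u] [IsIso v] (hf : f = u ≫ h ≫ v) (hh : A.P h) : A.P f := by
  rw [hf]
  exact A.comp u (h ≫ v) (A.iso u inferInstance)
    (A.comp h v hh (A.iso v inferInstance))

/-- An iso in the arrow category has iso components. -/
lemma arrowIso_isIso_left {X Y X' Y' : C} {f : X ⟶ Y} {h : X' ⟶ Y'}
    (i : Arrow.mk f ≅ Arrow.mk h) : IsIso i.hom.left :=
  ⟨i.inv.left, by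
    constructor
    · rw [← Arrow.comp_left, i.hom_inv_id]; rfl
    · rw [← Arrow.comp_left, i.inv_hom_id]; rfl⟩

lemma arrowIso_isIso_invRight {X Y X' Y' : C} {f : X ⟶ Y} {h : X' ⟶ Y'}
    (i : Arrow.mk f ≅ Arrow.mk h) : IsIso i.inv.right :=
  ⟨i.hom.right, by
    constructor
    · rw [← Arrow.comp_right, i.inv_hom_id]; rfl
    · rw [← Arrow.comp_right, i.hom_inv_id]; rfl⟩

lemma arrowIso_fac {X Y X' Y' : C} {f : X ⟶ Y} {h : X' ⟶ Y'}
    (i : Arrow.mk f ≅ Arrow.mk h) : f = i.hom.left ≫ h ≫ i.inv.right := by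
  have w : i.hom.left ≫ h = f ≫ i.hom.right := Arrow.w i.hom
  rw [← Category.assoc, w, Category.assoc, ← Arrow.comp_right, i.hom_inv_id]
  simp

/-- `EffectiveEpi` is stable under composition with isomorphisms on both sides. -/
lemma effectiveEpi_of_comp_iso {X Y X' Y' : C} {f : X ⟶ Y} {h : X' ⟶ Y'}
    (u : X ⟶ X') (v : Y' ⟶ Y) [IsIso u] [IsIso v] (hf : f = u ≫ h ≫ v)
    [EffectiveEpi h] : EffectiveEpi f := by
  subst hf
  refine ⟨⟨?_⟩⟩
  have key : ∀ {W : C} (e : X ⟶ W)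
      (hc : ∀ {Z : C} (g₁ g₂ : Z ⟶ X), g₁ ≫ (u ≫ h ≫ v) = g₂ ≫ (u ≫ h ≫ v) → g₁ ≫ e = g₂ ≫ e)
      {Z : C} (g₁ g₂ : Z ⟶ X'), g₁ ≫ h = g₂ ≫ h →
        g₁ ≫ inv u ≫ e = g₂ ≫ inv u ≫ e := by
    intro W e hc Z g₁ g₂ hgg
    have : (g₁ ≫ inv u) ≫ (u ≫ h ≫ v) = (g₂ ≫ inv u) ≫ (u ≫ h ≫ v) := by
      simp only [Category.assoc, IsIso.inv_hom_id_assoc]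
      rw [← Category.assoc, ← Category.assoc, hgg]
    simpa [Category.assoc] using hc _ _ this
  exact
    { desc := fun e hc => inv v ≫ EffectiveEpi.desc h (inv u ≫ e) (key e hc)
      fac := fun e hc => by
        simp only [Category.assoc, IsIso.hom_inv_id_assoc]
        rw [EffectiveEpi.fac h (inv u ≫ e) (key e hc)]
        simp
      uniq := fun e hc m hm => by
        have : v ≫ m = EffectiveEpi.desc h (inv u ≫ e) (key e hc) := by
          apply EffectiveEpi.uniq h (inv u ≫ e) (key e hc)
          rw [← hm]
          simp [Category.assoc]
        rw [← IsIso.inv_hom_id_assoc v m, this] }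

variable [HasFiniteLimits C]

/-- The square exhibiting `F.e g` as a base change of `g` along `F.m g`. -/
lemma isPullback_e (F : Paper.ImageFactorisation C) {W Z : C} (g : W ⟶ Z) :
    IsPullback (𝟙 W) (F.e g) g (F.m g) := by
  haveI := F.mono g
  have comm : (𝟙 W) ≫ g = F.e g ≫ F.m g := by rw [Category.id_comp, F.fac]
  refine IsPullback.of_isLimit (c := PullbackCone.mk _ _ comm) ?_
  refine PullbackCone.IsLimit.mk comm (fun s => s.fst)
    (fun s => Category.comp_id _) (fun s => ?_) (fun s m h₁ _ => by simpa using h₁)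
  rw [← cancel_mono (F.m g), Category.assoc, F.fac]
  exact s.condition

lemma e_mem (F : Paper.ImageFactorisation C) (A : Paper.AcyclicClass C)
    {W Z : C} {g : W ⟶ Z} (hg : A.P g) : A.P (F.e g) :=
  A.base_change g (F.e g) (F.m g) (𝟙 W) (isPullback_e F g) hg

lemma m_mem [HasColimits C] (F : Paper.ImageFactorisation C) (A : Paper.AcyclicClass C)
    {W Z : C} (g : W ⟶ Z) (hg : A.P g) : A.P (F.m g) := by
  classical
  set e : W ⟶ F.mid g := F.e g with he_def
  haveI hee : EffectiveEpi e := F.epi g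
  have he : A.P e := e_mem F A hg
  -- kernel pair of `e`
  set p₁ : pullback e e ⟶ W := pullback.fst e e
  set p₂ : pullback e e ⟶ W := pullback.snd e e
  have hp : IsPullback p₁ p₂ e e := IsPullback.of_hasPullback e e
  have hp₂ : A.P p₂ := A.base_change e p₂ e p₁ hp he
  have hp₁ : A.P p₁ := A.base_change e p₁ e p₂ hp.flip he
  have hpe : p₁ ≫ e = p₂ ≫ e := pullback.condition
  have hpg : p₂ ≫ g = p₁ ≫ g := by
    have h1 : (p₂ ≫ e) ≫ F.m g = (p₁ ≫ e) ≫ F.m g := by rw [hpe]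
    have h2 : e ≫ F.m g = g := F.fac g
    rw [Category.assoc, Category.assoc, h2] at h1
    exact h1
  -- the parallel pair in the arrow category
  let φ₁ : Arrow.mk (p₁ ≫ g) ⟶ Arrow.mk g :=
    Arrow.homMk (u := p₁) (v := 𝟙 Z) (by simp)
  let φ₂ : Arrow.mk (p₁ ≫ g) ⟶ Arrow.mk g :=
    Arrow.homMk (u := p₂) (v := 𝟙 Z) (by simp [hpg])
  -- the cofork with point `m g`
  let π : Arrow.mk g ⟶ Arrow.mk (F.m g) :=
    Arrow.homMk (u := e) (v := 𝟙 Z) (by simp [he_def, F.fac])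
  have hw : φ₁ ≫ π = φ₂ ≫ π := by
    ext
    · show p₁ ≫ e = p₂ ≫ e
      exact hpe
    · rfl
  let c : Cofork φ₁ φ₂ := Cofork.ofπ π hw
  -- descend through `e` at the level of left components
  have hdesc : ∀ (s : Cofork φ₁ φ₂) {T : C} (g₁ g₂ : T ⟶ W), g₁ ≫ e = g₂ ≫ e →
      g₁ ≫ (s.π.left) = g₂ ≫ (s.π.left) := by
    intro s T g₁ g₂ hgg
    have hs : p₁ ≫ s.π.left = p₂ ≫ s.π.left := by
      have := s.condition
      have h1 : (φ₁ ≫ s.π).left = (φ₂ ≫ s.π).left := by rw [this]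
      simpa [φ₁, φ₂, Comma.comp_left] using h1
    have hl₁ : pullback.lift g₁ g₂ hgg ≫ p₁ = g₁ := pullback.lift_fst _ _ _
    have hl₂ : pullback.lift g₁ g₂ hgg ≫ p₂ = g₂ := pullback.lift_snd _ _ _
    have h2 : (pullback.lift g₁ g₂ hgg ≫ p₁) ≫ s.π.left
        = (pullback.lift g₁ g₂ hgg ≫ p₂) ≫ s.π.left := by
      rw [Category.assoc, Category.assoc, hs]
    rwa [hl₁, hl₂] at h2
  have hc : IsColimit c := by
    refine Cofork.IsColimit.mk c (fun s => ?_) (fun s => ?_) (fun s m hm => ?_)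
    · refine Arrow.homMk (u := EffectiveEpi.desc e s.π.left (hdesc s))
        (v := s.π.right) ?_
      have hw : s.π.left ≫ s.pt.hom = g ≫ s.π.right := Arrow.w s.π
      have hfac : e ≫ F.m g = g := F.fac g
      have h3 : (e ≫ F.m g) ≫ s.π.right = g ≫ s.π.right := by rw [hfac]
      have : e ≫ EffectiveEpi.desc e s.π.left (hdesc s) ≫ s.pt.hom
          = e ≫ F.m g ≫ s.π.right := by
        rw [EffectiveEpi.fac_assoc, hw, ← Category.assoc, h3]
      exact (cancel_epi e).mp this
    · ext
      · show e ≫ EffectiveEpi.desc e s.π.left (hdesc s) = s.π.left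
        exact EffectiveEpi.fac e s.π.left (hdesc s)
      · show 𝟙 Z ≫ s.π.right = s.π.right
        simp
    · ext
      · show m.left = EffectiveEpi.desc e s.π.left (hdesc s)
        apply EffectiveEpi.uniq e s.π.left (hdesc s)
        have h1 : (c.π ≫ m).left = s.π.left := by rw [hm]
        simpa [c, π, Comma.comp_left] using h1
      · show m.right = s.π.right
        have h1 : (c.π ≫ m).right = s.π.right := by rw [hm]
        simpa [c, π, Comma.comp_right] using h1
  -- transport along the equivalence with a `v`-small shape
  let equ : AsSmall.{v} WalkingParallelPair ≌ WalkingParallelPair :=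
    AsSmall.equiv.symm
  have hc' : IsColimit (c.whisker equ.functor) := hc.whiskerEquivalence equ
  have := A.colim (AsSmall.{v} WalkingParallelPair)
    (equ.functor ⋙ parallelPair φ₁ φ₂) (c.whisker equ.functor) hc' ?_
  · exact this
  · rintro ⟨j⟩
    cases j with
    | zero => exact A.comp p₁ g hp₁ hg
    | one => exact hg
end AuxLemmas

/-- For an acyclic class `A`, `A ∩ Mono` is the class of images of maps of `A`, and
`A ∩ Surj` is the class of coimages of maps of `A`. -/
theorem acyclic_inter_mono_eq_images {C : Type u} [Category.{v} C]
    [HasFiniteLimits C] [HasColimits C]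
    (F : Paper.ImageFactorisation C) (A : Paper.AcyclicClass C) :
    (∀ ⦃X Y : C⦄ (f : X ⟶ Y), (A.P f ∧ Mono f) ↔
      ∃ (W Z : C) (g : W ⟶ Z), A.P g ∧ Nonempty (Arrow.mk f ≅ Arrow.mk (F.m g))) ∧
    (∀ ⦃X Y : C⦄ (f : X ⟶ Y), (A.P f ∧ EffectiveEpi f) ↔
      ∃ (W Z : C) (g : W ⟶ Z), A.P g ∧ Nonempty (Arrow.mk f ≅ Arrow.mk (F.e g))) := by
  constructor
  · intro X Y f
    constructor
    · rintro ⟨hA, hmono⟩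
      refine ⟨X, Y, f, hA, ⟨?_⟩⟩
      haveI := F.epi f
      haveI : Mono (F.e f ≫ F.m f) := by rw [F.fac]; exact hmono
      haveI : Mono (F.e f) := mono_of_mono (F.e f) (F.m f)
      haveI : IsIso (F.e f) := isIso_of_mono_of_strongEpi _
      exact Arrow.isoMk (asIso (F.e f)) (Iso.refl Y) (by simp [F.fac])
    · rintro ⟨W, Z, g, hg, ⟨i⟩⟩
      haveI := arrowIso_isIso_left i
      haveI := arrowIso_isIso_invRight i
      have key := arrowIso_fac i
      haveI := F.mono g
      refine ⟨AcyclicClass.of_comp_iso A _ _ key (m_mem F A g hg), ?_⟩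
      rw [key]
      exact mono_comp _ _
  · intro X Y f
    constructor
    · rintro ⟨hA, hepi⟩
      refine ⟨X, Y, f, hA, ⟨?_⟩⟩
      haveI := hepi
      haveI : StrongEpi f := inferInstance
      haveI : StrongEpi (F.e f ≫ F.m f) := by rw [F.fac]; infer_instance
      haveI : StrongEpi (F.m f) := strongEpi_of_strongEpi (F.e f) (F.m f)
      haveI := F.mono f
      haveI : IsIso (F.m f) := isIso_of_mono_of_strongEpi _
      refine Arrow.isoMk (Iso.refl X) (asIso (F.m f)).symm ?_
      show 𝟙 X ≫ F.e f = f ≫ inv (F.m f)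
      rw [Category.id_comp, eq_comm, IsIso.comp_inv_eq, F.fac]
    · rintro ⟨W, Z, g, hg, ⟨i⟩⟩
      haveI := arrowIso_isIso_left i
      haveI := arrowIso_isIso_invRight i
      have key := arrowIso_fac i
      haveI := F.epi g
      exact ⟨AcyclicClass.of_comp_iso A _ _ key (e_mem F A hg),
        effectiveEpi_of_comp_iso _ _ key⟩
end

section
/- Let φ : E → F be a left-exact localization of topoi with congruence W_φ (the class of maps inverted by φ). Then φ⁻¹ induces an isomorphism between the poset of acyclic classes in F and the poset of acyclic classes in E containing W_φ, and this restricts to an isomorphism between congruences in F and congruences in E containing W_φ. -/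
open CategoryTheory CategoryTheory.Limits

universe v u

namespace TransportProof

open Paper

universe w w'

section Generic

variable {C : Type u} [Category.{v} C]

theorem AcyclicClass.ext' {A B : AcyclicClass C} (h : A.P = B.P) : A = B := by
  cases A; cases B; cases h; rfl

theorem arrowIso_mem (A : AcyclicClass C) {f g : Arrow C} (e : f ≅ g) (h : A.P f.hom) :
    A.P g.hom := by
  have hl : IsIso e.inv.left := (inferInstance : IsIso (Arrow.leftFunc.mapIso e).inv)
  have hr : IsIso e.hom.right := (inferInstance : IsIso (Arrow.rightFunc.mapIso e).hom)
  have h2 : e.inv.right ≫ e.hom.right = 𝟙 _ := by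
    rw [← Arrow.comp_right, e.inv_hom_id]; rfl
  have key : e.inv.left ≫ f.hom ≫ e.hom.right = g.hom := by
    rw [← Category.assoc, Arrow.w e.inv, Category.assoc, h2]; simp
  rw [← key]
  exact A.comp _ _ (A.iso _ hl) (A.comp _ _ h (A.iso _ hr))

variable {J : Type w} [Category.{w'} J]

/-- The canonical natural transformation from left parts to right parts. -/
@[simps]
def natTransLR (D : J ⥤ Arrow C) : (D ⋙ Arrow.leftFunc) ⟶ (D ⋙ Arrow.rightFunc) where
  app j := (D.obj j).hom
  naturality _ _ f := (D.map f).w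

/-- A cocone in the arrow category whose left and right parts are colimits is a colimit. -/
def isColimitOfPointwise {D : J ⥤ Arrow C} (c : Cocone D)
    (hL : IsColimit (Arrow.leftFunc.mapCocone c))
    (hR : IsColimit (Arrow.rightFunc.mapCocone c)) : IsColimit c where
  desc s := Arrow.homMk (u := hL.desc (Arrow.leftFunc.mapCocone s))
      (v := hR.desc (Arrow.rightFunc.mapCocone s)) (by
    refine hL.hom_ext fun j => ?_
    have h1 := hL.fac (Arrow.leftFunc.mapCocone s) j
    have h2 := hR.fac (Arrow.rightFunc.mapCocone s) j
    have hw1 := Arrow.w (s.ι.app j)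
    have hw2 := Arrow.w_assoc (c.ι.app j) (hR.desc (Arrow.rightFunc.mapCocone s))
    dsimp at h1 h2 hw1 hw2 ⊢
    erw [reassoc_of% h1, hw1, hw2, h2]; rfl)
  fac s j := by
    ext
    · exact hL.fac (Arrow.leftFunc.mapCocone s) j
    · exact hR.fac (Arrow.rightFunc.mapCocone s) j
  uniq s m hm := by
    ext
    · refine hL.uniq (Arrow.leftFunc.mapCocone s) m.left fun j => ?_
      have := congrArg CommaMorphism.left (hm j); simp at this; exact this
    · refine hR.uniq (Arrow.rightFunc.mapCocone s) m.right fun j => ?_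
      have := congrArg CommaMorphism.right (hm j); simp at this; exact this

/-- A cone in the arrow category whose left and right parts are limits is a limit. -/
def isLimitOfPointwise {D : J ⥤ Arrow C} (c : Cone D)
    (hL : IsLimit (Arrow.leftFunc.mapCone c))
    (hR : IsLimit (Arrow.rightFunc.mapCone c)) : IsLimit c where
  lift s := Arrow.homMk (u := hL.lift (Arrow.leftFunc.mapCone s))
      (v := hR.lift (Arrow.rightFunc.mapCone s)) (by
    refine hR.hom_ext fun j => ?_
    have h1 := hL.fac (Arrow.leftFunc.mapCone s) j
    have h2 := hR.fac (Arrow.rightFunc.mapCone s) j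
    have hw1 := Arrow.w (s.π.app j)
    have hw2 := Arrow.w (c.π.app j)
    dsimp at h1 h2 hw1 hw2 ⊢
    erw [Category.assoc, ← hw2, ← Category.assoc, h1, hw1, Category.assoc, h2]; rfl)
  fac s j := by
    ext
    · exact hL.fac (Arrow.leftFunc.mapCone s) j
    · exact hR.fac (Arrow.rightFunc.mapCone s) j
  uniq s m hm := by
    ext
    · refine hL.uniq (Arrow.leftFunc.mapCone s) m.left fun j => ?_
      have := congrArg CommaMorphism.left (hm j); simp at this; exact this
    · refine hR.uniq (Arrow.rightFunc.mapCone s) m.right fun j => ?_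
      have := congrArg CommaMorphism.right (hm j); simp at this; exact this

section CoconeArrow

variable {D : J ⥤ Arrow C} (cL : Cocone (D ⋙ Arrow.leftFunc)) (cR : Cocone (D ⋙ Arrow.rightFunc))

/-- The induced map between the colimits of left and right parts. -/
noncomputable def arrowDesc (hL : IsColimit cL) : cL.pt ⟶ cR.pt :=
  hL.desc ((Cocone.precompose (natTransLR D)).obj cR)

theorem arrowDesc_fac (hL : IsColimit cL) (j : J) :
    cL.ι.app j ≫ arrowDesc cL cR hL = (D.obj j).hom ≫ cR.ι.app j :=
  hL.fac ((Cocone.precompose (natTransLR D)).obj cR) j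

/-- The cocone over `D` built from pointwise colimit cocones. -/
@[simps]
noncomputable def coconeArrow (hL : IsColimit cL) : Cocone D where
  pt := Arrow.mk (arrowDesc cL cR hL)
  ι :=
    { app := fun j => Arrow.homMk (u := cL.ι.app j) (v := cR.ι.app j) (arrowDesc_fac cL cR hL j)
      naturality := fun j j' f => by
        ext
        · exact (cL.w f).trans (Category.comp_id _).symm
        · exact (cR.w f).trans (Category.comp_id _).symm }

noncomputable def coconeArrowIsColimit (hL : IsColimit cL) (hR : IsColimit cR) :
    IsColimit (coconeArrow cL cR hL) := by
  refine isColimitOfPointwise _ (hL.ofIsoColimit (Cocones.ext (Iso.refl _) fun j => ?_))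
    (hR.ofIsoColimit (Cocones.ext (Iso.refl _) fun j => ?_)) <;> simp [coconeArrow] <;> exact Category.comp_id _

variable {C' : Type u} [Category.{v} C']

/-- The image of the pointwise cocone under `G.mapArrow`. -/
@[simps]
noncomputable def coconeArrowMap (hL : IsColimit cL) (G : C ⥤ C') : Cocone (D ⋙ G.mapArrow) where
  pt := Arrow.mk (G.map (arrowDesc cL cR hL))
  ι :=
    { app := fun j => Arrow.homMk (u := G.map (cL.ι.app j)) (v := G.map (cR.ι.app j)) (by
        dsimp
        erw [← G.map_comp, arrowDesc_fac, G.map_comp]; rfl)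
      naturality := fun j j' f => by
        ext
        · dsimp
          exact ((G.map_comp _ _).symm.trans (congrArg G.map (cL.w f))).trans (Category.comp_id _).symm
        · dsimp
          exact ((G.map_comp _ _).symm.trans (congrArg G.map (cR.w f))).trans (Category.comp_id _).symm }

noncomputable def coconeArrowMapIsColimit (hL : IsColimit cL) (hR : IsColimit cR) (G : C ⥤ C')
    (hL' : IsColimit (G.mapCocone cL)) (hR' : IsColimit (G.mapCocone cR)) :
    IsColimit (coconeArrowMap cL cR hL G) := by
  refine isColimitOfPointwise _ (hL'.ofIsoColimit (Cocones.ext (Iso.refl _) fun j => ?_))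
    (hR'.ofIsoColimit (Cocones.ext (Iso.refl _) fun j => ?_)) <;> simp [coconeArrowMap] <;> exact Category.comp_id _

end CoconeArrow

section ConeArrow

variable {D : J ⥤ Arrow C} (cL : Cone (D ⋙ Arrow.leftFunc)) (cR : Cone (D ⋙ Arrow.rightFunc))

/-- The induced map between the limits of left and right parts. -/
noncomputable def arrowLift (hR : IsLimit cR) : cL.pt ⟶ cR.pt :=
  hR.lift ((Cones.postcompose (natTransLR D)).obj cL)

theorem arrowLift_fac (hR : IsLimit cR) (j : J) :
    arrowLift cL cR hR ≫ cR.π.app j = cL.π.app j ≫ (D.obj j).hom :=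
  hR.fac ((Cones.postcompose (natTransLR D)).obj cL) j

/-- The cone over `D` built from pointwise limit cones. -/
@[simps]
noncomputable def coneArrow (hR : IsLimit cR) : Cone D where
  pt := Arrow.mk (arrowLift cL cR hR)
  π :=
    { app := fun j => Arrow.homMk (u := cL.π.app j) (v := cR.π.app j)
        ((arrowLift_fac cL cR hR j).symm)
      naturality := fun j j' f => by
        ext
        · exact (Category.id_comp _).trans (cL.w f).symm
        · exact (Category.id_comp _).trans (cR.w f).symm }

noncomputable def coneArrowIsLimit (hL : IsLimit cL) (hR : IsLimit cR) :
    IsLimit (coneArrow cL cR hR) := by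
  refine isLimitOfPointwise _ (hL.ofIsoLimit (Cones.ext (Iso.refl _) fun j => ?_))
    (hR.ofIsoLimit (Cones.ext (Iso.refl _) fun j => ?_)) <;> simp [coneArrow] <;> exact (Category.id_comp _).symm

variable {C' : Type u} [Category.{v} C']

/-- The image of the pointwise cone under `G.mapArrow`. -/
@[simps]
noncomputable def coneArrowMap (hR : IsLimit cR) (G : C ⥤ C') : Cone (D ⋙ G.mapArrow) where
  pt := Arrow.mk (G.map (arrowLift cL cR hR))
  π :=
    { app := fun j => Arrow.homMk (u := G.map (cL.π.app j)) (v := G.map (cR.π.app j)) (by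
        dsimp
        erw [← G.map_comp, ← arrowLift_fac cL cR hR j, G.map_comp]; rfl)
      naturality := fun j j' f => by
        ext
        · dsimp
          exact (Category.id_comp _).trans ((congrArg G.map (cL.w f).symm).trans (G.map_comp _ _))
        · dsimp
          exact (Category.id_comp _).trans ((congrArg G.map (cR.w f).symm).trans (G.map_comp _ _)) }

noncomputable def coneArrowMapIsLimit (hL : IsLimit cL) (hR : IsLimit cR) (G : C ⥤ C')
    (hL' : IsLimit (G.mapCone cL)) (hR' : IsLimit (G.mapCone cR)) :
    IsLimit (coneArrowMap cL cR hR G) := by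
  refine isLimitOfPointwise _ (hL'.ofIsoLimit (Cones.ext (Iso.refl _) fun j => ?_))
    (hR'.ofIsoLimit (Cones.ext (Iso.refl _) fun j => ?_)) <;> simp [coneArrowMap] <;> exact (Category.id_comp _).symm

end ConeArrow

end Generic

section Localization

variable {E : Type u} {F : Type u} [Category.{v} E] [Category.{v} F]
  [HasFiniteLimits E] [HasColimits E] [HasFiniteLimits F] [HasColimits F]
  (φ : E ⥤ F) (ι : F ⥤ E) (adj : φ ⊣ ι) [ι.Full] [ι.Faithful]
  [PreservesColimits φ] [PreservesFiniteLimits φ]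

lemma isIso_map_unit (X : E) : IsIso (φ.map (adj.unit.app X)) := by
  have h : φ.map (adj.unit.app X) ≫ adj.counit.app (φ.obj X) = 𝟙 _ :=
    adj.left_triangle_components X
  exact isIso_of_comp_hom_eq_id (adj.counit.app (φ.obj X)) h

include adj in
lemma counit_sandwich (B : AcyclicClass F) {X Y : F} (g : X ⟶ Y) :
    B.P (φ.map (ι.map g)) ↔ B.P g := by
  have hnat : φ.map (ι.map g) ≫ adj.counit.app Y = adj.counit.app X ≫ g := by
    simpa using adj.counit.naturality g
  constructor
  · intro h
    have hg : g = inv (adj.counit.app X) ≫ φ.map (ι.map g) ≫ adj.counit.app Y := by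
      rw [hnat, IsIso.inv_hom_id_assoc]
    rw [hg]
    exact B.comp _ _ (B.iso _ inferInstance) (B.comp _ _ h (B.iso _ inferInstance))
  · intro h
    have hg : φ.map (ι.map g) = adj.counit.app X ≫ g ≫ inv (adj.counit.app Y) := by
      rw [← Category.assoc, ← hnat, Category.assoc, IsIso.hom_inv_id, Category.comp_id]
    rw [hg]
    exact B.comp _ _ (B.iso _ inferInstance) (B.comp _ _ h (B.iso _ inferInstance))

include adj in
lemma mem_of_mem_unitImage (A : AcyclicClass E)
    (hW : ∀ ⦃X Y : E⦄ (f : X ⟶ Y), IsIso (φ.map f) → A.P f)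
    {X Y : E} (f : X ⟶ Y) (h : A.P (ι.map (φ.map f))) : A.P f := by
  have hcomm : adj.unit.app X ≫ ι.map (φ.map f) = f ≫ adj.unit.app Y := by
    simpa using (adj.unit.naturality f).symm
  have hpb : IsPullback (pullback.fst (ι.map (φ.map f)) (adj.unit.app Y))
      (pullback.snd (ι.map (φ.map f)) (adj.unit.app Y)) (ι.map (φ.map f)) (adj.unit.app Y) :=
    IsPullback.of_hasPullback _ _
  have h1 : A.P (pullback.snd (ι.map (φ.map f)) (adj.unit.app Y)) :=
    A.base_change _ _ _ _ hpb h
  have hpbF := hpb.map φ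
  haveI : IsIso (φ.map (adj.unit.app Y)) := isIso_map_unit φ ι adj Y
  haveI : IsIso (φ.map (adj.unit.app X)) := isIso_map_unit φ ι adj X
  have hfst : IsIso (φ.map (pullback.fst (ι.map (φ.map f)) (adj.unit.app Y))) := by
    refine ⟨⟨hpbF.lift (𝟙 _) (φ.map (ι.map (φ.map f)) ≫ inv (φ.map (adj.unit.app Y)))
      (by simp), ?_, ?_⟩⟩
    · refine hpbF.hom_ext ?_ ?_
      · rw [Category.assoc, hpbF.lift_fst, Category.comp_id, Category.id_comp]
      · rw [Category.assoc, hpbF.lift_snd, ← Category.assoc, hpbF.w, Category.assoc,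
          IsIso.hom_inv_id, Category.comp_id, Category.id_comp]
    · exact hpbF.lift_fst _ _ _
  have hq : φ.map (pullback.lift (adj.unit.app X) f hcomm) ≫
      φ.map (pullback.fst (ι.map (φ.map f)) (adj.unit.app Y)) = φ.map (adj.unit.app X) := by
    rw [← φ.map_comp, pullback.lift_fst]
  have hk : IsIso (φ.map (pullback.lift (adj.unit.app X) f hcomm)) := by
    have h3 : φ.map (pullback.lift (adj.unit.app X) f hcomm) =
        φ.map (adj.unit.app X) ≫ inv (φ.map (pullback.fst (ι.map (φ.map f)) (adj.unit.app Y))) := by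
      rw [IsIso.eq_comp_inv, hq]
    rw [h3]
    infer_instance
  have hkf : pullback.lift (adj.unit.app X) f hcomm ≫
      pullback.snd (ι.map (φ.map f)) (adj.unit.app Y) = f := pullback.lift_snd _ _ _
  rw [← hkf]
  exact A.comp _ _ (hW _ hk) h1

include adj in
lemma unitImage_mem (A : AcyclicClass E)
    (hW : ∀ ⦃X Y : E⦄ (f : X ⟶ Y), IsIso (φ.map f) → A.P f)
    {X Y : E} (f : X ⟶ Y) (h : A.P f) : A.P (ι.map (φ.map f)) := by
  have hcomm : adj.unit.app X ≫ ι.map (φ.map f) = f ≫ adj.unit.app Y := by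
    simpa using (adj.unit.naturality f).symm
  haveI : IsIso (φ.map (adj.unit.app X)) := isIso_map_unit φ ι adj X
  haveI : IsIso (φ.map (adj.unit.app Y)) := isIso_map_unit φ ι adj Y
  -- Step 1: the cobase change `pushout.inl` of `f` along the unit is in `A`.
  have hinl : A.P (pushout.inl (adj.unit.app X) f) := by
    let a : Arrow.mk (𝟙 X) ⟶ Arrow.mk (𝟙 (ι.obj (φ.obj X))) :=
      Arrow.homMk (u := adj.unit.app X) (v := adj.unit.app X) (by simp)
    let b : Arrow.mk (𝟙 X) ⟶ Arrow.mk f := Arrow.homMk (u := 𝟙 X) (v := f) (by simp)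
    let inl' : Arrow.mk (𝟙 (ι.obj (φ.obj X))) ⟶ Arrow.mk (pushout.inl (adj.unit.app X) f) :=
      Arrow.homMk (u := 𝟙 (ι.obj (φ.obj X))) (v := pushout.inl (adj.unit.app X) f) (by simp)
    let inr' : Arrow.mk f ⟶ Arrow.mk (pushout.inl (adj.unit.app X) f) :=
      Arrow.homMk (u := adj.unit.app X) (v := pushout.inr (adj.unit.app X) f)
        (by simpa using pushout.condition)
    have hw : a ≫ inl' = b ≫ inr' := by
      ext
      · simp [a, b, inl', inr']
      · simpa [a, b, inl', inr'] using pushout.condition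
    let c₀ : PushoutCocone a b := PushoutCocone.mk inl' inr' hw
    let pcL : PushoutCocone (Arrow.leftFunc.map a) (Arrow.leftFunc.map b) :=
      PushoutCocone.mk (𝟙 (ι.obj (φ.obj X))) (adj.unit.app X) (by exact (Category.comp_id _).trans (Category.id_comp _).symm)
    have hpcL : IsColimit pcL := by
      refine PushoutCocone.IsColimit.mk _ (fun s => s.inl) (fun s => Category.id_comp _)
        (fun s => ?_) (fun s m hm₁ hm₂ => (Category.id_comp _).symm.trans hm₁)
      have := s.condition
      simp [a, b] at this
      exact this.trans (Category.id_comp _)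
    let pcR : PushoutCocone (Arrow.rightFunc.map a) (Arrow.rightFunc.map b) :=
      PushoutCocone.mk (pushout.inl (adj.unit.app X) f) (pushout.inr (adj.unit.app X) f)
        pushout.condition
    have hpcR : IsColimit pcR := pushoutIsPushout _ _
    have hL : IsColimit (Arrow.leftFunc.mapCocone c₀) := by
      refine IsColimit.ofIsoColimit
        ((IsColimit.precomposeHomEquiv (spanCompIso Arrow.leftFunc a b) _).symm hpcL)
        (Cocones.ext (Iso.refl _) ?_)
      rintro (_ | _ | _) <;> simp [c₀, pcL, a, b, inl', inr']
      · exact Category.comp_id _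
      · exact (Category.comp_id _).trans (Category.id_comp _)
      · exact (Category.comp_id _).trans (Category.id_comp _)
    have hR : IsColimit (Arrow.rightFunc.mapCocone c₀) := by
      refine IsColimit.ofIsoColimit
        ((IsColimit.precomposeHomEquiv (spanCompIso Arrow.rightFunc a b) _).symm hpcR)
        (Cocones.ext (Iso.refl _) ?_)
      rintro (_ | _ | _) <;> simp [c₀, pcR, a, b, inl', inr']
      · exact Category.comp_id _
      · exact (Category.comp_id _).trans (Category.id_comp _)
      · exact (Category.comp_id _).trans (Category.id_comp _)
    have hc₀ : IsColimit c₀ := isColimitOfPointwise _ hL hR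
    have hobj : ∀ x : WalkingSpan, A.P (((span a b).obj x).hom) := by
      rintro (_ | _ | _)
      · show A.P (𝟙 X)
        exact A.iso _ inferInstance
      · show A.P (𝟙 (ι.obj (φ.obj X)))
        exact A.iso _ inferInstance
      · show A.P f
        exact h
    exact A.colim _ ((ULiftHomULiftCategory.equiv.{v, v} WalkingSpan).inverse ⋙ span a b)
      (c₀.whisker (ULiftHomULiftCategory.equiv.{v, v} WalkingSpan).inverse)
      (hc₀.whiskerEquivalence (ULiftHomULiftCategory.equiv.{v, v} WalkingSpan).symm)
      (fun j => hobj _)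
  -- Step 2: the comparison map is inverted by `φ`.
  have hpo : IsPushout (adj.unit.app X) f (pushout.inl (adj.unit.app X) f)
      (pushout.inr (adj.unit.app X) f) := IsPushout.of_hasPushout _ _
  have hpoF := hpo.map φ
  have hinr : IsIso (φ.map (pushout.inr (adj.unit.app X) f)) := by
    refine ⟨⟨hpoF.desc (inv (φ.map (adj.unit.app X)) ≫ φ.map f) (𝟙 _) (by simp), ?_, ?_⟩⟩
    · exact hpoF.inr_desc _ _ _
    · refine hpoF.hom_ext ?_ ?_
      · rw [← Category.assoc, hpoF.inl_desc, Category.comp_id, Category.assoc, ← hpoF.w,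
          IsIso.inv_hom_id_assoc]
      · rw [← Category.assoc, hpoF.inr_desc, Category.comp_id, Category.id_comp]
  have hdesc : φ.map (pushout.inr (adj.unit.app X) f) ≫
      φ.map (pushout.desc (ι.map (φ.map f)) (adj.unit.app Y) hcomm) =
      φ.map (adj.unit.app Y) := by
    rw [← φ.map_comp, pushout.inr_desc]
  have ht : IsIso (φ.map (pushout.desc (ι.map (φ.map f)) (adj.unit.app Y) hcomm)) := by
    have h3 : φ.map (pushout.desc (ι.map (φ.map f)) (adj.unit.app Y) hcomm) =
        inv (φ.map (pushout.inr (adj.unit.app X) f)) ≫ φ.map (adj.unit.app Y) := by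
      rw [IsIso.eq_inv_comp, hdesc]
    rw [h3]
    infer_instance
  have hfac : pushout.inl (adj.unit.app X) f ≫
      pushout.desc (ι.map (φ.map f)) (adj.unit.app Y) hcomm = ι.map (φ.map f) :=
    pushout.inl_desc _ _ _
  rw [← hfac]
  exact A.comp _ _ hinl (hW _ ht)

/-- The preimage acyclic class. -/
noncomputable def preClass (B : AcyclicClass F) : AcyclicClass E where
  P := fun _ _ f => B.P (φ.map f)
  iso := fun X Y f hf => B.iso _ (by haveI := hf; infer_instance)
  comp := fun X Y Z f g hf hg => by
    show B.P (φ.map (f ≫ g))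
    rw [φ.map_comp]
    exact B.comp _ _ hf hg
  colim := by
    intro J _ D c hc hj
    let cL := colimit.cocone (D ⋙ Arrow.leftFunc)
    let cR := colimit.cocone (D ⋙ Arrow.rightFunc)
    have hL : IsColimit cL := colimit.isColimit _
    have hR : IsColimit cR := colimit.isColimit _
    have hK := coconeArrowIsColimit cL cR hL hR
    have isoC := hc.coconePointUniqueUpToIso hK
    have hKφ := coconeArrowMapIsColimit cL cR hL hR φ
      (isColimitOfPreserves φ hL) (isColimitOfPreserves φ hR)
    have hmem : B.P (φ.map (arrowDesc cL cR hL)) :=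
      B.colim J (D ⋙ φ.mapArrow) _ hKφ (fun j => hj j)
    exact arrowIso_mem B (φ.mapArrow.mapIso isoC.symm) hmem
  base_change := fun X Y X' Y' f f' g g' hpb hf => B.base_change _ _ _ _ (hpb.map φ) hf

include adj

/-- The image acyclic class of an acyclic class containing `W_φ`. -/
noncomputable def imclClass (A : AcyclicClass E)
    (hW : ∀ ⦃X Y : E⦄ (f : X ⟶ Y), IsIso (φ.map f) → A.P f) : AcyclicClass F where
  P := fun _ _ g => A.P (ι.map g)
  iso := fun X Y g hg => A.iso _ (by haveI := hg; infer_instance)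
  comp := fun X Y Z f g hf hg => by
    show A.P (ι.map (f ≫ g))
    rw [ι.map_comp]
    exact A.comp _ _ hf hg
  colim := by
    intro J _ D c hc hj
    let D' := D ⋙ ι.mapArrow
    let cL := colimit.cocone (D' ⋙ Arrow.leftFunc)
    let cR := colimit.cocone (D' ⋙ Arrow.rightFunc)
    have hL : IsColimit cL := colimit.isColimit _
    have hR : IsColimit cR := colimit.isColimit _
    have hK := coconeArrowIsColimit cL cR hL hR
    have hmem : A.P (arrowDesc cL cR hL) :=
      A.colim J D' _ hK (fun j => hj j)
    have hKφ := coconeArrowMapIsColimit cL cR hL hR φ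
      (isColimitOfPreserves φ hL) (isColimitOfPreserves φ hR)
    let ν : (D' ⋙ φ.mapArrow) ≅ D := NatIso.ofComponents
      (fun j => Arrow.isoMk (asIso (adj.counit.app ((D.obj j).left)) :)
        (asIso (adj.counit.app ((D.obj j).right)) :)
        ((adj.counit.naturality ((D.obj j).hom)).symm))
      (fun {j j'} g => by
        ext
        · exact adj.counit.naturality ((D.map g).left)
        · exact adj.counit.naturality ((D.map g).right))
    have hc'' := (IsColimit.precomposeInvEquiv ν _).symm hKφ
    have isoC := hc.coconePointUniqueUpToIso hc''
    have h1 : A.P (ι.map (φ.map (arrowDesc cL cR hL))) :=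
      unitImage_mem φ ι adj A hW _ hmem
    exact arrowIso_mem A (ι.mapArrow.mapIso isoC.symm) h1
  base_change := by
    intro X Y X' Y' f f' g g' hpb hf
    haveI := adj.rightAdjoint_preservesLimits
    haveI : PreservesFiniteLimits ι := PreservesLimitsOfSize.preservesFiniteLimits.{v, u} ι
    exact A.base_change _ _ _ _ (hpb.map ι) hf

end Localization

end TransportProof
/-- Transport along a left-exact localization `φ : E → F` (a cocontinuous left-exact
reflector): `φ⁻¹` induces a bijection between acyclic classes of `F` and acyclic classes of `E`
containing `W_φ`, which restricts to congruences (acyclic classes closed under finite limits). -/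
theorem transport_acyclic_classes {E : Type u} {F : Type u}
    [Category.{v} E] [Category.{v} F]
    [HasFiniteLimits E] [HasColimits E] [HasFiniteLimits F] [HasColimits F]
    (φ : E ⥤ F) (ι : F ⥤ E) (adj : φ ⊣ ι) [ι.Full] [ι.Faithful]
    [PreservesColimits φ] [PreservesFiniteLimits φ] :
    ∃ e : Paper.AcyclicClass F ≃
        {A : Paper.AcyclicClass E // ∀ ⦃X Y : E⦄ (f : X ⟶ Y), IsIso (φ.map f) → A.P f},
      (∀ (B : Paper.AcyclicClass F) ⦃X Y : E⦄ (f : X ⟶ Y),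
        (e B).val.P f ↔ B.P (φ.map f)) ∧
      (∀ B : Paper.AcyclicClass F,
        Paper.ClosedUnderFiniteLimits B.P ↔ Paper.ClosedUnderFiniteLimits (e B).val.P) := by
  classical
  haveI := adj.rightAdjoint_preservesLimits
  haveI : PreservesFiniteLimits ι := PreservesLimitsOfSize.preservesFiniteLimits.{v, u} ι
  refine ⟨{ toFun := fun B => ⟨TransportProof.preClass φ B, fun X Y f hf => B.iso _ hf⟩
            invFun := fun A => TransportProof.imclClass φ ι adj A.1 A.2
            left_inv := ?_
            right_inv := ?_ }, fun B X Y f => Iff.rfl, ?_⟩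
  · intro B
    refine TransportProof.AcyclicClass.ext' ?_
    funext X Y g
    exact propext (TransportProof.counit_sandwich φ ι adj B g)
  · rintro ⟨A, hA⟩
    refine Subtype.ext (TransportProof.AcyclicClass.ext' ?_)
    funext X Y f
    exact propext ⟨fun h => TransportProof.mem_of_mem_unitImage φ ι adj A hA f h,
      fun h => TransportProof.unitImage_mem φ ι adj A hA f h⟩
  · intro B
    constructor
    · intro hB J _ _ D c hc hj
      let cL := limit.cone (D ⋙ Arrow.leftFunc)
      let cR := limit.cone (D ⋙ Arrow.rightFunc)
      have hL : IsLimit cL := limit.isLimit _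
      have hR : IsLimit cR := limit.isLimit _
      have hK := TransportProof.coneArrowIsLimit cL cR hL hR
      have isoC := hc.conePointUniqueUpToIso hK
      have hKφ := TransportProof.coneArrowMapIsLimit cL cR hL hR φ
        (isLimitOfPreserves φ hL) (isLimitOfPreserves φ hR)
      have hmem : B.P (φ.map (TransportProof.arrowLift cL cR hR)) :=
        hB J (D ⋙ φ.mapArrow) _ hKφ (fun j => hj j)
      exact TransportProof.arrowIso_mem B (φ.mapArrow.mapIso isoC.symm) hmem
    · intro hE J _ _ D c hc hj
      let cL := limit.cone (D ⋙ Arrow.leftFunc)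
      let cR := limit.cone (D ⋙ Arrow.rightFunc)
      have hL : IsLimit cL := limit.isLimit _
      have hR : IsLimit cR := limit.isLimit _
      have hK := TransportProof.coneArrowIsLimit cL cR hL hR
      have isoC := hc.conePointUniqueUpToIso hK
      have hKι := TransportProof.coneArrowMapIsLimit cL cR hL hR ι
        (isLimitOfPreserves ι hL) (isLimitOfPreserves ι hR)
      have hmem : B.P (φ.map (ι.map (TransportProof.arrowLift cL cR hR))) :=
        hE J (D ⋙ ι.mapArrow) _ hKι
          (fun j => (TransportProof.counit_sandwich φ ι adj B _).mpr (hj j))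
      have h2 : B.P (TransportProof.arrowLift cL cR hR) :=
        (TransportProof.counit_sandwich φ ι adj B _).mp hmem
      exact TransportProof.arrowIso_mem B isoC.symm h2
end

section
/- The inclusion of the poset of congruences into the poset of acyclic classes in a topos E admits both a left adjoint, given by the congruence closure A ↦ A^cong, and a right adjoint, given by A ↦ A^Δ∞ = { f | all iterated diagonals of f lie in A }. -/
open CategoryTheory CategoryTheory.Limits

universe v u

section Aux
open Paper

variable {C : Type u} [Category.{v} C] [HasFiniteLimits C]

lemma diag_mem (P : MorphismProperty C) (hW : ClosedUnderFiniteLimits P)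
    {X Y : C} (f : X ⟶ Y) (hf : P f) (hid : P (𝟙 X)) :
    P (pullback.diagonal f) := by
  let α : Arrow.mk (𝟙 X) ⟶ Arrow.mk f := Arrow.homMk (u := 𝟙 X) (v := f) (by simp)
  let fst : Arrow.mk (pullback.diagonal f) ⟶ Arrow.mk (𝟙 X) :=
    Arrow.homMk (u := 𝟙 X) (v := pullback.fst f f) (by simp)
  let snd : Arrow.mk (pullback.diagonal f) ⟶ Arrow.mk (𝟙 X) :=
    Arrow.homMk (u := 𝟙 X) (v := pullback.snd f f) (by simp)
  have heq : fst ≫ α = snd ≫ α := by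
    apply Arrow.hom_ext
    · simp [fst, snd, α]
    · simpa [fst, snd, α] using pullback.condition
  let c : PullbackCone α α := PullbackCone.mk fst snd heq
  have hc : IsLimit c := by
    have hα : α.right = f := rfl
    refine PullbackCone.IsLimit.mk heq (fun s => ?_) (fun s => ?_) (fun s => ?_)
      (fun s m h1 h2 => ?_)
    · refine Arrow.homMk (u := s.fst.left)
        (v := pullback.lift s.fst.right s.snd.right ?_) ?_
      · have := Arrow.hom.congr_right s.condition
        rw [Arrow.comp_right, Arrow.comp_right, hα] at this
        exact this
      · apply pullback.hom_ext
        · simp only [Category.assoc]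
          erw [pullback.lift_fst (Arrow.Hom.right s.fst)]
          simpa using s.fst.w
        · have hl : s.fst.left = s.snd.left := by
            have := congrArg (·.left) s.condition
            simpa [α] using this
          rw [hl]
          simp only [Category.assoc]
          erw [pullback.lift_snd (Arrow.Hom.right s.fst)]
          simpa using s.snd.w
    · apply Arrow.hom_ext <;> simp [fst] <;> exact pullback.lift_fst _ _ _
    · have hl : s.fst.left = s.snd.left := by
        have := congrArg (·.left) s.condition
        simpa [α] using this
      apply Arrow.hom_ext
      · simp [snd, hl]
      · simp [snd]
        exact pullback.lift_snd _ _ _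
    · apply Arrow.hom_ext
      · have := congrArg (·.left) h1
        simpa [fst] using this
      · apply pullback.hom_ext
        · have := congrArg (·.right) h1
          erw [pullback.lift_fst (Arrow.Hom.right s.fst)]
          simpa [fst] using this
        · have := congrArg (·.right) h2
          erw [pullback.lift_snd (Arrow.Hom.right s.fst)]
          simpa [snd] using this
  -- transport along equivalence to a v-small shape
  let e := (ULiftHomULiftCategory.equiv.{v, v} WalkingCospan).symm
  have hc' := hc.whiskerEquivalence e
  refine hW _ (e.functor ⋙ cospan α α) (c.whisker e.functor) hc' ?_
  have key : ∀ k : WalkingCospan, P ((cospan α α).obj k).hom := by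
    rintro (_ | _ | _) <;> simpa using (by first | exact hf | exact hid)
  intro j
  exact key (e.functor.obj j)

end Aux

lemma iterDiag_mem {C : Type u} [Category.{v} C] [HasFiniteLimits C]
    (W : Paper.AcyclicClass C) (hW : Paper.ClosedUnderFiniteLimits W.P) :
    ∀ (n : ℕ) (g : Arrow C), W.P g.hom → W.P (Paper.iterDiag n g).hom := by
  intro n
  induction n with
  | zero => intro g hg; exact hg
  | succ n ih =>
    intro g hg
    exact ih (Arrow.mk (pullback.diagonal g.hom))
      (diag_mem W.P hW g.hom hg (W.iso (𝟙 _) inferInstance))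

/-- The inclusion of congruences into acyclic classes has a left adjoint (congruence
closure) and a right adjoint `A ↦ A^Δ∞`. -/
theorem congruence_inclusion_adjoints {C : Type u} [Category.{v} C]
    [HasFiniteLimits C] [HasColimits C] :
    (∀ (A : Paper.AcyclicClass C) (W : Paper.AcyclicClass C),
      Paper.ClosedUnderFiniteLimits W.P →
      ((∀ ⦃X Y : C⦄ (f : X ⟶ Y), Paper.congClosure A.P f → W.P f) ↔
       (∀ ⦃X Y : C⦄ (f : X ⟶ Y), A.P f → W.P f))) ∧
    (∀ (A : Paper.AcyclicClass C) (W : Paper.AcyclicClass C),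
      Paper.ClosedUnderFiniteLimits W.P →
      ((∀ ⦃X Y : C⦄ (f : X ⟶ Y), W.P f → Paper.suspInfty A.P f) ↔
       (∀ ⦃X Y : C⦄ (f : X ⟶ Y), W.P f → A.P f))) := by
  constructor
  · intro A W hW
    constructor
    · intro h X Y f hf
      exact h f (fun A' _ hsub => hsub f hf)
    · intro h X Y f hc
      exact hc W hW h
  · intro A W hW
    constructor
    · intro h X Y f hf
      exact h f hf 0
    · intro h X Y f hf n
      exact h _ (iterDiag_mem W hW n (Arrow.mk f) hf)
end

section
/- Let j : Ω → Ω be a Lawvere–Tierney topology on a topos E, with Dense(j) the class of j-dense monomorphisms and Close(j) the class of j-closed monomorphisms. Then (Dense(j), Close(j)) forms a factorization system on monomorphisms: Dense(j) ⊥ Close(j), Close(j) = Dense(j)^⊥ ∩ Mono, Dense(j) = ^⊥Close(j) ∩ Mono, and every monomorphism factors uniquely as a j-dense monomorphism followed by a j-closed monomorphism. -/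
open CategoryTheory CategoryTheory.Limits

universe v u

section LTAux

open Paper Subobject

variable {C : Type u} [Category.{v} C] [HasPullbacks C]

lemma pullback_obj_mk' {X Y Z : C} (f : Z ⟶ Y) [Mono f] (b : X ⟶ Y) :
    (Subobject.pullback b).obj (Subobject.mk f) = Subobject.mk (pullback.snd f b) := rfl

lemma map_obj_mk' {A B Z : C} (u : A ⟶ B) (v : B ⟶ Z) [Mono u] [Mono v] :
    (Subobject.map v).obj (Subobject.mk u) = Subobject.mk (u ≫ v) := rfl

/-- Dense monos lift uniquely against closed monos. -/
lemma LT_lift (jt : Paper.LTTopology C) {S A X Y : C} (u : S ⟶ A) (f : X ⟶ Y)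
    (hu : Paper.DenseClass jt u) (hf : Paper.ClosedClass jt f) : Paper.UniqueLift u f := by
  obtain ⟨hum, hdense⟩ := hu
  obtain ⟨hfm, hclosed⟩ := hf
  intro a b hsq
  have h1 : Subobject.mk u ≤ (Subobject.pullback b).obj (Subobject.mk f) := by
    rw [pullback_obj_mk']
    exact Subobject.mk_le_mk_of_comm (pullback.lift a u hsq.symm) (pullback.lift_snd _ _ _)
  have h2 := jt.monotone A _ _ h1
  rw [hdense] at h2
  have h3 : jt.j A ((Subobject.pullback b).obj (Subobject.mk f))
      = (Subobject.pullback b).obj (Subobject.mk f) := by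
    rw [← jt.natural b (Subobject.mk f), hclosed]
  rw [h3] at h2
  have hT : Subobject.mk (pullback.snd f b) = (⊤ : Subobject A) := by
    rw [← pullback_obj_mk' f b]
    exact le_antisymm le_top h2
  haveI : IsIso (pullback.snd f b) := by
    rw [Subobject.isIso_iff_mk_eq_top]; exact hT
  refine ⟨inv (pullback.snd f b) ≫ pullback.fst f b, ⟨?_, ?_⟩, ?_⟩
  · rw [← cancel_mono f]
    simp [pullback.condition, hsq]
  · simp [pullback.condition]
  · intro d' ⟨hd1, hd2⟩
    rw [← cancel_mono f, hd2]
    simp [pullback.condition]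

/-- The dense-closed factorization of a mono through its closure. -/
lemma LT_factor (jt : Paper.LTTopology C) {A Z : C} (w : A ⟶ Z) (hw : Mono w) :
    ∃ (B : C) (u : A ⟶ B) (v : B ⟶ Z),
      u ≫ v = w ∧ Paper.DenseClass jt u ∧ Paper.ClosedClass jt v := by
  haveI := hw
  set T := jt.j Z (Subobject.mk w) with hT
  have hle : Subobject.mk w ≤ T := jt.inflating Z _
  refine ⟨(T : C), Subobject.ofMkLE w T hle, T.arrow, Subobject.ofMkLE_arrow hle, ?_, ?_⟩
  · haveI hmono : Mono (Subobject.ofMkLE w T hle) := inferInstance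
    refine ⟨hmono, ?_⟩
    set u := Subobject.ofMkLE w T hle with hu
    have huv : u ≫ T.arrow = w := Subobject.ofMkLE_arrow hle
    haveI : Mono (u ≫ T.arrow) := mono_comp u T.arrow
    have h0 : Subobject.mk w = Subobject.mk (u ≫ T.arrow) :=
      (Subobject.mk_eq_mk_of_comm _ _ (Iso.refl A) (by simpa using huv.symm)).symm
    have key : (Subobject.pullback T.arrow).obj (Subobject.mk w) = Subobject.mk u := by
      rw [h0, ← map_obj_mk' u T.arrow, Subobject.pullback_map_self]
    rw [← key, ← jt.natural T.arrow (Subobject.mk w), ← hT]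
    have h2 := Subobject.pullback_self T.arrow
    rwa [Subobject.mk_arrow] at h2
  · refine ⟨inferInstance, ?_⟩
    rw [Subobject.mk_arrow, hT]
    exact jt.idem Z _

end LTAux

/-- A Lawvere–Tierney topology `j` yields a factorization system on monomorphisms:
dense and closed monos are uniquely orthogonal, each class is determined by the other via
orthogonality among monos, and every monomorphism factors uniquely (up to unique compatible
isomorphism) as a dense mono followed by a closed mono. -/
theorem LT_factorization_system {C : Type u} [Category.{v} C] [HasPullbacks C]
    (jt : Paper.LTTopology C) :
    (∀ ⦃S A X Y : C⦄ (u : S ⟶ A) (f : X ⟶ Y),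
      Paper.DenseClass jt u → Paper.ClosedClass jt f → Paper.UniqueLift u f) ∧
    (∀ ⦃X Y : C⦄ (f : X ⟶ Y), Paper.ClosedClass jt f ↔
      (Mono f ∧ ∀ ⦃S A : C⦄ (u : S ⟶ A), Paper.DenseClass jt u → Paper.UniqueLift u f)) ∧
    (∀ ⦃S A : C⦄ (u : S ⟶ A), Paper.DenseClass jt u ↔
      (Mono u ∧ ∀ ⦃X Y : C⦄ (f : X ⟶ Y), Paper.ClosedClass jt f → Paper.UniqueLift u f)) ∧
    (∀ ⦃A Z : C⦄ (w : A ⟶ Z), Mono w →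
      ∃ (B : C) (u : A ⟶ B) (v : B ⟶ Z),
        u ≫ v = w ∧ Paper.DenseClass jt u ∧ Paper.ClosedClass jt v ∧
        ∀ (B' : C) (u' : A ⟶ B') (v' : B' ⟶ Z), u' ≫ v' = w →
          Paper.DenseClass jt u' → Paper.ClosedClass jt v' →
          ∃ e : B ⟶ B', (u ≫ e = u' ∧ e ≫ v' = v ∧ IsIso e) ∧
            ∀ e' : B ⟶ B', u ≫ e' = u' ∧ e' ≫ v' = v → e' = e) := by
  refine ⟨fun S A X Y u f hu hf => LT_lift jt u f hu hf, ?_, ?_, ?_⟩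
  · -- closed = right orthogonal to dense, among monos
    intro X Y f
    constructor
    · intro hf
      exact ⟨hf.1, fun S A u hu => LT_lift jt u f hu hf⟩
    · rintro ⟨hm, horth⟩
      haveI := hm
      obtain ⟨B, u, v, huv, hud, hvc⟩ := LT_factor jt f hm
      haveI hum := hud.1
      haveI hvm := hvc.1
      obtain ⟨d, ⟨hd1, hd2⟩, -⟩ := horth u hud (𝟙 X) v (by simp [huv])
      have hdu : d ≫ u = 𝟙 B := by
        rw [← cancel_mono v, Category.assoc, huv, hd2, Category.id_comp]
      haveI : IsIso u := ⟨d, hd1, hdu⟩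
      obtain ⟨_, hclosedv⟩ := hvc
      refine ⟨hm, ?_⟩
      have hmk : Subobject.mk f = Subobject.mk v :=
        Subobject.mk_eq_mk_of_comm f v (asIso u) (by simpa using huv)
      rw [hmk]
      exact hclosedv
  · -- dense = left orthogonal to closed, among monos
    intro S A u
    constructor
    · intro hu
      exact ⟨hu.1, fun X Y f hf => LT_lift jt u f hu hf⟩
    · rintro ⟨hm, horth⟩
      haveI := hm
      set T := jt.j A (Subobject.mk u) with hT
      have hle : Subobject.mk u ≤ T := jt.inflating A _
      have hvc : Paper.ClosedClass jt T.arrow :=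
        ⟨inferInstance, by rw [Subobject.mk_arrow, hT]; exact jt.idem A _⟩
      obtain ⟨d, ⟨hd1, hd2⟩, -⟩ := horth T.arrow hvc (Subobject.ofMkLE u T hle) (𝟙 A)
        (by simp [Subobject.ofMkLE_arrow hle])
      have h2 : T.arrow ≫ d = 𝟙 _ := by
        rw [← cancel_mono T.arrow, Category.assoc, hd2, Category.comp_id, Category.id_comp]
      haveI : IsIso T.arrow := ⟨d, h2, hd2⟩
      exact ⟨hm, Subobject.eq_top_of_isIso_arrow T⟩
  · -- existence and uniqueness of the factorization
    intro A Z w hw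
    obtain ⟨B, u, v, huv, hud, hvc⟩ := LT_factor jt w hw
    refine ⟨B, u, v, huv, hud, hvc, ?_⟩
    intro B' u' v' huv' hud' hvc'
    obtain ⟨e, ⟨he1, he2⟩, heu⟩ := LT_lift jt u v' hud hvc' u' v (by rw [huv, huv'])
    obtain ⟨e', ⟨he1', he2'⟩, -⟩ := LT_lift jt u' v hud' hvc u v' (by rw [huv, huv'])
    obtain ⟨d0, -, hd0u⟩ := LT_lift jt u v hud hvc u v rfl
    obtain ⟨d1, -, hd1u⟩ := LT_lift jt u' v' hud' hvc' u' v' rfl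
    have hee' : e ≫ e' = 𝟙 B := by
      have ha : e ≫ e' = d0 := hd0u _ ⟨by rw [← Category.assoc, he1, he1'],
        by rw [Category.assoc, he2', he2]⟩
      have hb : 𝟙 B = d0 := hd0u _ ⟨Category.comp_id u, Category.id_comp v⟩
      rw [ha, hb]
    have he'e : e' ≫ e = 𝟙 B' := by
      have ha : e' ≫ e = d1 := hd1u _ ⟨by rw [← Category.assoc, he1', he1],
        by rw [Category.assoc, he2, he2']⟩
      have hb : 𝟙 B' = d1 := hd1u _ ⟨Category.comp_id u', Category.id_comp v'⟩
      rw [ha, hb]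
    exact ⟨e, ⟨he1, he2, ⟨e', hee', he'e⟩⟩, fun e'' h => heu e'' h⟩
end

section
/- An algebraic morphism of topoi φ : E → F is cotopological (its congruence W_φ contains no non-invertible monomorphism) if and only if φ reflects surjective maps, if and only if φ reflects n-connected maps for some (equivalently every) −1 ≤ n ≤ ∞. -/
open CategoryTheory CategoryTheory.Limits

universe v u

section AuxCotop

variable {C : Type u} [Category.{v} C]

/-- Effective epimorphisms transfer along composition with isomorphisms. -/
theorem effectiveEpi_of_fac {X Y X' Y' : C} (f : X ⟶ Y) (i : X' ⟶ X) (j : Y ⟶ Y')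
    [EffectiveEpi f] [IsIso i] [IsIso j] (g : X' ⟶ Y') (hg : i ≫ f ≫ j = g) :
    EffectiveEpi g := by
  subst hg
  have key : ∀ {W : C} (e : X' ⟶ W),
      (∀ {Z : C} (g₁ g₂ : Z ⟶ X'), g₁ ≫ (i ≫ f ≫ j) = g₂ ≫ (i ≫ f ≫ j) → g₁ ≫ e = g₂ ≫ e) →
      ∀ {Z : C} (g₁ g₂ : Z ⟶ X), g₁ ≫ f = g₂ ≫ f →
        g₁ ≫ (inv i ≫ e) = g₂ ≫ (inv i ≫ e) := by
    intro W e h Z g₁ g₂ hgg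
    have := h (g₁ ≫ inv i) (g₂ ≫ inv i) (by
      simp only [Category.assoc, IsIso.inv_hom_id_assoc]
      rw [reassoc_of% hgg])
    simpa using this
  refine ⟨⟨⟨fun {W} e h => inv j ≫ EffectiveEpi.desc f (inv i ≫ e) (key e h), ?_, ?_⟩⟩⟩
  · intro W e h
    simp only [Category.assoc, IsIso.hom_inv_id_assoc]
    rw [EffectiveEpi.fac f (inv i ≫ e) (key e h)]
    simp
  · intro W e h m hm
    have h2 : f ≫ j ≫ m = inv i ≫ e := by
      rw [← hm]; simp
    have := EffectiveEpi.uniq f (inv i ≫ e) (key e h) (j ≫ m) h2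
    rw [← this]; simp

theorem isIso_of_mono_of_effectiveEpi {X Y : C} (f : X ⟶ Y) [Mono f] [EffectiveEpi f] :
    IsIso f := by
  have hcond : ∀ {Z : C} (g₁ g₂ : Z ⟶ X), g₁ ≫ f = g₂ ≫ f → g₁ ≫ 𝟙 X = g₂ ≫ 𝟙 X := by
    intro Z g₁ g₂ hg
    simpa using (cancel_mono f).mp hg
  refine ⟨EffectiveEpi.desc f (𝟙 X) hcond, EffectiveEpi.fac f (𝟙 X) hcond, ?_⟩
  have : f ≫ EffectiveEpi.desc f (𝟙 X) hcond ≫ f = f ≫ 𝟙 Y := by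
    rw [← Category.assoc, EffectiveEpi.fac f (𝟙 X) hcond]; simp
  exact (cancel_epi f).mp this

theorem effectiveEpi_of_arrowIso {a b : Arrow C} (e : a ≅ b) (h : EffectiveEpi a.hom) :
    EffectiveEpi b.hom := by
  haveI := h
  haveI : IsIso e.inv.left := (Arrow.leftFunc.mapIso e).symm.isIso_hom
  haveI : IsIso e.hom.right := (Arrow.rightFunc.mapIso e).isIso_hom
  refine effectiveEpi_of_fac a.hom e.inv.left e.hom.right b.hom ?_
  have hleft : e.inv.left ≫ e.hom.left = 𝟙 _ := by
    rw [← Arrow.comp_left, e.inv_hom_id]; rfl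
  rw [← Arrow.w e.hom, ← Category.assoc, hleft, Category.id_comp]

variable [HasPullbacks C]

/-- The diagonal is functorial in isomorphisms of arrows. -/
noncomputable def diagArrowIso {a b : Arrow C} (e : a ≅ b) :
    Arrow.mk (pullback.diagonal a.hom) ≅ Arrow.mk (pullback.diagonal b.hom) :=
  Arrow.isoMk' _ _ (Arrow.leftFunc.mapIso e)
    (asIso (pullback.map a.hom a.hom b.hom b.hom e.hom.left e.hom.left e.hom.right
      (Arrow.w e.hom).symm (Arrow.w e.hom).symm))
    (by
      change e.hom.left ≫ _ = _
      apply pullback.hom_ext <;>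
        simp [pullback.diagonal, pullback.map, pullback.lift_fst, pullback.lift_snd,
          pullback.lift_fst_assoc, pullback.lift_snd_assoc])

noncomputable def iterDiagIso : ∀ (n : ℕ) {a b : Arrow C}, (a ≅ b) →
    (Paper.iterDiag n a ≅ Paper.iterDiag n b)
  | 0, _, _, e => e
  | n+1, _, _, e => iterDiagIso n (diagArrowIso e)

variable {D : Type u} [Category.{v} D] [HasPullbacks D]

noncomputable def mapDiagIso (φ : C ⥤ D) [PreservesFiniteLimits φ] (a : Arrow C) :
    φ.mapArrow.obj (Arrow.mk (pullback.diagonal a.hom)) ≅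
      Arrow.mk (pullback.diagonal (φ.map a.hom)) :=
  Arrow.isoMk (Iso.refl _) (PreservesPullback.iso φ a.hom a.hom)
    (by
      dsimp
      erw [Category.id_comp]
      change _ = φ.map (pullback.diagonal a.hom) ≫ _
      apply pullback.hom_ext <;> simp [← φ.map_comp])

noncomputable def mapIterDiagIso (φ : C ⥤ D) [PreservesFiniteLimits φ] :
    ∀ (n : ℕ) (a : Arrow C),
      φ.mapArrow.obj (Paper.iterDiag n a) ≅ Paper.iterDiag n (φ.mapArrow.obj a)
  | 0, _ => Iso.refl _
  | n+1, a =>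
      (mapIterDiagIso φ n (Arrow.mk (pullback.diagonal a.hom))) ≪≫
        iterDiagIso n (mapDiagIso φ a)

omit [HasPullbacks D] in
theorem isIso_iterDiag : ∀ (n : ℕ) (a : Arrow C), IsIso a.hom →
    IsIso (Paper.iterDiag n a).hom
  | 0, _, h => h
  | n+1, a, h => by
    haveI := h
    haveI : Mono a.hom := inferInstance
    exact isIso_iterDiag n (Arrow.mk (pullback.diagonal a.hom))
      ((pullback.isIso_diagonal_iff a.hom).mpr inferInstance)

omit [HasPullbacks D] in
theorem map_effectiveEpi (φ : C ⥤ D) [PreservesColimits φ] {X Y : C} (f : X ⟶ Y)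
    (h : EffectiveEpi f) : EffectiveEpi (φ.map f) := by
  haveI := h
  obtain ⟨W, l, r, w, hc⟩ := regularEpiOfEffectiveEpi f
  haveI : RegularEpi (φ.map f) :=
    { W := φ.obj W
      left := φ.map l
      right := φ.map r
      w := by rw [← φ.map_comp, ← φ.map_comp, w]
      isColimit := isColimitCoforkMapOfIsColimit φ w hc }
  exact RegularEpi.effectiveEpi this

end AuxCotop

/-- An algebraic morphism of topoi (cocontinuous left-exact functor) is
cotopological (inverts no non-invertible monomorphism) iff it reflects surjections, iff it
reflects n-connected maps for some n, iff for every n, iff it reflects ∞-connected maps. -/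
theorem cotopological_characterization {E : Type u} {F : Type u}
    [Category.{v} E] [Category.{v} F]
    [HasFiniteLimits E] [HasColimits E] [HasFiniteLimits F] [HasColimits F]
    (φ : E ⥤ F) [PreservesColimits φ] [PreservesFiniteLimits φ] :
    List.TFAE [
      ∀ ⦃X Y : E⦄ (f : X ⟶ Y), Mono f → IsIso (φ.map f) → IsIso f,
      ∀ ⦃X Y : E⦄ (f : X ⟶ Y), EffectiveEpi (φ.map f) → EffectiveEpi f,
      ∃ n : ℕ, ∀ ⦃X Y : E⦄ (f : X ⟶ Y),
        Paper.connMaps (n+1) (φ.map f) → Paper.connMaps (n+1) f,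
      ∀ n : ℕ, ∀ ⦃X Y : E⦄ (f : X ⟶ Y),
        Paper.connMaps (n+1) (φ.map f) → Paper.connMaps (n+1) f,
      ∀ ⦃X Y : E⦄ (f : X ⟶ Y), Paper.infConn (φ.map f) → Paper.infConn f ] := by
  tfae_have 1 → 2 := by
    intro h1 X Y f hf
    haveI := hf
    let p₁ := pullback.fst f f
    let p₂ := pullback.snd f f
    let m : coequalizer p₁ p₂ ⟶ Y := coequalizer.desc f pullback.condition
    have hem : coequalizer.π p₁ p₂ ≫ m = f := coequalizer.π_desc _ _
    have w2 : φ.map p₁ ≫ φ.map f = φ.map p₂ ≫ φ.map f := by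
      rw [← φ.map_comp, ← φ.map_comp, pullback.condition]
    have hc1 := isColimitOfHasCoequalizerOfPreservesColimit φ p₁ p₂
    have hcond : ∀ (s : Cofork (φ.map p₁) (φ.map p₂)) {Z : F} (g₁ g₂ : Z ⟶ φ.obj X),
        g₁ ≫ φ.map f = g₂ ≫ φ.map f → g₁ ≫ s.π = g₂ ≫ s.π := by
      intro s Z g₁ g₂ hg
      have l1 : (pullback.lift g₁ g₂ hg ≫ (PreservesPullback.iso φ f f).inv) ≫ φ.map p₁
          = g₁ := by simp [p₁]; exact pullback.lift_fst _ _ _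
      have l2 : (pullback.lift g₁ g₂ hg ≫ (PreservesPullback.iso φ f f).inv) ≫ φ.map p₂
          = g₂ := by simp [p₂]; exact pullback.lift_snd _ _ _
      calc g₁ ≫ s.π
          = (pullback.lift g₁ g₂ hg ≫ (PreservesPullback.iso φ f f).inv) ≫
              φ.map p₁ ≫ s.π := by rw [← Category.assoc, l1]
        _ = (pullback.lift g₁ g₂ hg ≫ (PreservesPullback.iso φ f f).inv) ≫
              φ.map p₂ ≫ s.π := by rw [s.condition]
        _ = g₂ ≫ s.π := by rw [← Category.assoc, l2]
    have hc2 : IsColimit (Cofork.ofπ (φ.map f) w2) :=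
      Cofork.IsColimit.mk _
        (fun s => EffectiveEpi.desc (φ.map f) s.π (fun g₁ g₂ hg => hcond s g₁ g₂ hg))
        (fun s => by
          simpa using EffectiveEpi.fac (φ.map f) s.π (fun g₁ g₂ hg => hcond s g₁ g₂ hg))
        (fun s d hd => EffectiveEpi.uniq (φ.map f) s.π
          (fun g₁ g₂ hg => hcond s g₁ g₂ hg) d (by simpa using hd))
    have hiso : IsIso (φ.map m) := by
      have heq : φ.map m = (hc1.coconePointUniqueUpToIso hc2).hom := by
        apply Cofork.IsColimit.hom_ext hc1
        simp only [Cofork.π_ofπ]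
        rw [← φ.map_comp, hem]
        have h2 := hc1.comp_coconePointUniqueUpToIso_hom hc2 WalkingParallelPair.one
        simpa using h2.symm
      rw [heq]; infer_instance
    have hmm : Mono m := by
      haveI : IsIso (φ.map m) := hiso
      have key : φ.map (pullback.diagonal m) ≫ (PreservesPullback.iso φ m m).hom
          = pullback.diagonal (φ.map m) := by
        apply pullback.hom_ext <;>
          simp [PreservesPullback.iso_hom_fst, PreservesPullback.iso_hom_snd, ← φ.map_comp]
      have hdiag : IsIso (φ.map (pullback.diagonal m)) := by
        haveI : IsIso (pullback.diagonal (φ.map m)) := inferInstance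
        have heq2 : φ.map (pullback.diagonal m)
            = pullback.diagonal (φ.map m) ≫ (PreservesPullback.iso φ m m).inv := by
          rw [← key, Category.assoc, Iso.hom_inv_id, Category.comp_id]
        rw [heq2]; infer_instance
      exact (pullback.isIso_diagonal_iff m).mp
        (h1 (pullback.diagonal m) inferInstance hdiag)
    haveI hIsoM : IsIso m := h1 m hmm hiso
    exact effectiveEpi_of_fac (coequalizer.π p₁ p₂) (𝟙 X) m f (by simpa using hem)
  tfae_have 2 → 4 := by
    intro h2 n X Y f hc k hk
    have hke : EffectiveEpi (Paper.iterDiag k (Arrow.mk (φ.map f))).hom := hc k hk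
    have h' : EffectiveEpi (φ.map (Paper.iterDiag k (Arrow.mk f)).hom) :=
      effectiveEpi_of_arrowIso (mapIterDiagIso φ k (Arrow.mk f)).symm hke
    exact h2 _ h'
  tfae_have 2 → 5 := by
    intro h2 X Y f hc k
    have hke : EffectiveEpi (Paper.iterDiag k (Arrow.mk (φ.map f))).hom := hc k
    have h' : EffectiveEpi (φ.map (Paper.iterDiag k (Arrow.mk f)).hom) :=
      effectiveEpi_of_arrowIso (mapIterDiagIso φ k (Arrow.mk f)).symm hke
    exact h2 _ h'
  tfae_have 4 → 3 := by
    intro h4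
    exact ⟨0, h4 0⟩
  tfae_have 3 → 1 := by
    rintro ⟨n, h3⟩ X Y f hmono hiso
    haveI := hmono
    have hconn : Paper.connMaps (n+1) (φ.map f) := by
      intro k _
      haveI : IsIso (Paper.iterDiag k (Arrow.mk (φ.map f))).hom :=
        isIso_iterDiag k (Arrow.mk (φ.map f)) hiso
      infer_instance
    haveI : EffectiveEpi f := h3 f hconn 0 (Nat.succ_pos n)
    exact isIso_of_mono_of_effectiveEpi f
  tfae_have 5 → 1 := by
    intro h5 X Y f hmono hiso
    haveI := hmono
    have hconn : Paper.infConn (φ.map f) := by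
      intro k
      haveI : IsIso (Paper.iterDiag k (Arrow.mk (φ.map f))).hom :=
        isIso_iterDiag k (Arrow.mk (φ.map f)) hiso
      infer_instance
    haveI : EffectiveEpi f := h5 f hconn 0
    exact isIso_of_mono_of_effectiveEpi f
  tfae_finish
end
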